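/- (Unbiasedness of the population IPW contrast for the ACE.) Let P and Q be distributions over (W,T,Y) with q(t) > 0, q(w,t) > 0 and q(w) > 0 for q ∈ {P,Q} and all w ∈ W, t ∈ {0,1}. Assume causal invariance P(y|T=t,W=w) = Q(y|T=t,W=w) for all w,t,y, and P(w|T=t) = P(w) = Q(w) for all w,t. Then Σ_{w∈W} Σ_{y∈𝒴} y·Q(w,1,y)/Q(T=1|W=w) − Σ_{w∈W} Σ_{y∈𝒴} y·Q(w,0,y)/Q(T=0|W=w) = E_P[Y|T=1] − E_P[Y|T=0]; that is, the population IPW functional computed from the confounded source distribution Q equals the average predictive effect under the randomized target distribution P (the average causal effect). -/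

import Mathlib

open Finset

/-- A distribution over `(W, T, Y)` where `T` takes values in `{0,1}` (`Fin 2`):
a nonnegative function summing to one. -/
def IsDist {W Y : Type*} [Fintype W] [Fintype Y] (q : W → Fin 2 → Y → ℝ) : Prop :=
  (∀ w t y, 0 ≤ q w t y) ∧ ∑ w, ∑ t, ∑ y, q w t y = 1

section Marginals

variable {W Y : Type*} [Fintype W] [Fintype Y]

/-- `q(w,t) = Σ_y q(w,t,y)` -/
noncomputable def pWT (q : W → Fin 2 → Y → ℝ) (w : W) (t : Fin 2) : ℝ := ∑ y, q w t y

/-- `q(t) = Σ_w q(w,t)` -/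
noncomputable def pT (q : W → Fin 2 → Y → ℝ) (t : Fin 2) : ℝ := ∑ w, pWT q w t

/-- `q(w) = Σ_t q(w,t)` -/
noncomputable def pW (q : W → Fin 2 → Y → ℝ) (w : W) : ℝ := ∑ t, pWT q w t

/-- `q(w | T = t) = q(w,t) / q(t)` -/
noncomputable def condW (q : W → Fin 2 → Y → ℝ) (w : W) (t : Fin 2) : ℝ := pWT q w t / pT q t

/-- `q(T = t | W = w) = q(w,t) / q(w)` -/
noncomputable def condT (q : W → Fin 2 → Y → ℝ) (w : W) (t : Fin 2) : ℝ := pWT q w t / pW q w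

/-- `q(y | T = t, W = w) = q(w,t,y) / q(w,t)` -/
noncomputable def condY (q : W → Fin 2 → Y → ℝ) (w : W) (t : Fin 2) (y : Y) : ℝ :=
  q w t y / pWT q w t

/-- `q(y, w | T = t) = q(w,t,y) / q(t)` -/
noncomputable def condYW (q : W → Fin 2 → Y → ℝ) (w : W) (t : Fin 2) (y : Y) : ℝ :=
  q w t y / pT q t

/-- `E_q[Y | T = t, W = w] = Σ_y ν(y) · q(y | T=t, W=w)`, where `ν` gives the real
outcome value of each element of `Y`. -/
noncomputable def condE (ν : Y → ℝ) (q : W → Fin 2 → Y → ℝ) (w : W) (t : Fin 2) : ℝ :=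
  ∑ y, ν y * condY q w t y

/-- `E_q[Y | T = t] = Σ_w q(w | T=t) · E_q[Y | T=t, W=w]` -/
noncomputable def Ey (ν : Y → ℝ) (q : W → Fin 2 → Y → ℝ) (t : Fin 2) : ℝ :=
  ∑ w, condW q w t * condE ν q w t

end Marginals

/-- **Unbiasedness of the population IPW contrast for the ACE.**
Under causal invariance between `P` and `Q` and `P(w|T=t) = P(w) = Q(w)`, the
population IPW functional computed from the confounded source `Q` equals the average
predictive effect under the randomized target `P`:
`Σ_w Σ_y y·Q(w,1,y)/Q(T=1|W=w) − Σ_w Σ_y y·Q(w,0,y)/Q(T=0|W=w)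
  = E_P[Y|T=1] − E_P[Y|T=0]`. -/
theorem ipw_contrast_eq_ace
    {W Y : Type*} [Fintype W] [Fintype Y] [Nonempty W] [Nonempty Y]
    (ν : Y → ℝ) (P Q : W → Fin 2 → Y → ℝ) (hP : IsDist P) (hQ : IsDist Q)
    (hPt : ∀ t, 0 < pT P t) (hQt : ∀ t, 0 < pT Q t)
    (hPwt : ∀ w t, 0 < pWT P w t) (hQwt : ∀ w t, 0 < pWT Q w t)
    (hPw : ∀ w, 0 < pW P w) (hQw : ∀ w, 0 < pW Q w)
    (hinv : ∀ w t y, condY P w t y = condY Q w t y)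
    (hmarg : ∀ w t, condW P w t = pW P w ∧ pW P w = pW Q w) :
    (∑ w, ∑ y, ν y * Q w 1 y / condT Q w 1) -
        (∑ w, ∑ y, ν y * Q w 0 y / condT Q w 0) =
      Ey ν P 1 - Ey ν P 0 := by
  have key : ∀ t, (∑ w, ∑ y, ν y * Q w t y / condT Q w t) = Ey ν P t := by
    intro t
    unfold Ey
    refine Finset.sum_congr rfl fun w _ => ?_
    have hwt := (hQwt w t).ne'
    have hw := (hQw w).ne'
    have h1 : ∀ y, ν y * Q w t y / condT Q w t
        = pW Q w * (ν y * condY Q w t y) := by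
      intro y
      unfold condT condY
      field_simp
    rw [Finset.sum_congr rfl fun y _ => h1 y, ← Finset.mul_sum]
    have hce : condE ν P w t = condE ν Q w t := by
      unfold condE
      exact Finset.sum_congr rfl fun y _ => by rw [hinv]
    rw [(hmarg w t).1, (hmarg w t).2, hce]
    rfl
  rw [key 1, key 0]
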